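/- arXiv:1309.7751 — 7 statements merged into one kernel-verified Lean document; each statement's English description precedes it below -/
import Mathlib

section
/- If k ≥ 3 is odd and n ≡ 2 (mod 4), then n does not divide S_k(n) = 1^k + 2^k + ... + n^k. -/
theorem stmt_2 (n k : ℕ) (hk : Odd k) (hk3 : 3 ≤ k) (hn : n % 4 = 2) :
    ¬ n ∣ ∑ j ∈ Finset.Icc 1 n, j ^ k := by
  intro h
  have hk1 : k ≠ 0 := by omega
  set S := ∑ j ∈ Finset.Icc 1 n, j ^ k with hS
  have h2 : 2 ∣ S := dvd_trans ⟨n / 2, by omega⟩ h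
  set T := ∑ j ∈ Finset.Icc 1 n, j with hT
  -- Gauss sum: T * 2 = n * (n + 1)
  have hTval : T * 2 = n * (n + 1) := by
    have hset : Finset.range (n + 1) = insert 0 (Finset.Icc 1 n) := by
      ext x; simp [Finset.mem_range, Finset.mem_Icc]; omega
    have : ∑ i ∈ Finset.range (n + 1), i = T := by
      rw [hset, Finset.sum_insert (by simp)]
      simp [hT]
    rw [← this, Finset.sum_range_id_mul_two]
    simp [Nat.mul_comm]
  have hq : n = 4 * (n / 4) + 2 := by omega
  set q := n / 4 with hqdef
  have hTodd : T % 2 = 1 := by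
    have h16 : T * 2 = 16 * (q * q) + 20 * q + 6 := by rw [hTval, hq]; ring
    omega
  -- parity via ZMod 2
  have hpow : ∀ x : ZMod 2, x ^ k = x := by
    intro x
    fin_cases x
    · exact zero_pow hk1
    · exact one_pow k
  have hcast : (S : ZMod 2) = (T : ZMod 2) := by
    rw [hS, hT]
    push_cast
    exact Finset.sum_congr rfl fun j _ => hpow _
  have hS0 : (S : ZMod 2) = 0 := (ZMod.natCast_eq_zero_iff S 2).mpr h2
  have hT1 : (T : ZMod 2) = 1 := by
    rw [← ZMod.natCast_mod T 2, hTodd, Nat.cast_one]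
  rw [hS0, hT1] at hcast
  exact one_ne_zero hcast.symm
end

section
/- For odd k ≥ 3, the average (1^k + 2^k + ... + n^k)/n is an integer if and only if n is incongruent to 2 modulo 4. -/
open Finset

lemma zmod_sum_eq {M : Type*} [AddCommMonoid M] (n : ℕ) [NeZero n] (f : ZMod n → M) :
    ∑ x : ZMod n, f x = ∑ j ∈ range n, f (j : ZMod n) := by
  rcases n with _ | m
  · exact absurd rfl (NeZero.ne 0)
  · rw [← Fin.sum_univ_eq_sum_range (fun j => f (j : ZMod (m+1))) (m+1)]
    apply Finset.sum_congr rfl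
    intro x _
    congr 1
    exact (ZMod.natCast_zmod_val x).symm

lemma cast_sum_eq (n k : ℕ) [NeZero n] (hk : 1 ≤ k) :
    ((∑ j ∈ Icc 1 n, j ^ k : ℕ) : ZMod n) = ∑ x : ZMod n, x ^ k := by
  push_cast
  rw [zmod_sum_eq n (fun x => x ^ k)]
  rcases n with _ | m
  · exact absurd rfl (NeZero.ne 0)
  rw [Finset.sum_range_succ']
  rw [Finset.sum_Icc_succ_top (by omega : 1 ≤ m + 1)]
  have h0 : ((0 : ℕ) : ZMod (m+1)) ^ k = 0 := by
    simp [zero_pow (by omega : k ≠ 0)]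
  have hn0 : ((m+1 : ℕ) : ZMod (m+1)) ^ k = 0 := by
    simp [zero_pow (by omega : k ≠ 0)]
  rw [h0, hn0, add_zero, add_zero]
  rw [show Icc 1 m = Ico 1 (m+1) by rfl, Finset.sum_Ico_eq_sum_range]
  apply Finset.sum_congr (by congr 1)
  intro i _
  congr 2
  omega

lemma neg_eq_self_val (n : ℕ) [NeZero n] (x : ZMod n) (h : -x = x) :
    x.val = 0 ∨ 2 * x.val = n := by
  have h2 : ((2 * x.val : ℕ) : ZMod n) = 0 := by
    push_cast
    rw [ZMod.natCast_zmod_val]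
    linear_combination -h
  rw [ZMod.natCast_eq_zero_iff] at h2
  have hv : x.val < n := x.val_lt
  rcases h2 with ⟨c, hc⟩
  have hn : 0 < n := Nat.pos_of_ne_zero (NeZero.ne n)
  have hc1 : c ≤ 1 := by nlinarith
  interval_cases c <;> omega

-- case n % 4 ≠ 2 : sum is zero
lemma sum_pow_eq_zero (n k : ℕ) [NeZero n] (hk : Odd k) (hk3 : 3 ≤ k) (h4 : n % 4 ≠ 2) :
    ∑ x : ZMod n, x ^ k = 0 := by
  apply Finset.sum_ninvolution (fun x => -x)
  · intro a
    rw [Odd.neg_pow hk]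
    ring
  · intro a ha hne
    exfalso
    apply ha
    rcases neg_eq_self_val n a hne with h0 | h2
    · have : a = 0 := by
        have := ZMod.natCast_zmod_val a
        rw [h0] at this
        simpa using this.symm
      rw [this]
      exact zero_pow (by omega)
    · -- 2 * a.val = n, n % 4 = 0, so a.val even, a^2 = 0
      have hmod : n % 4 = 0 := by omega
      have hval : ∃ t, a.val = 2 * t := ⟨n / 4, by omega⟩
      rcases hval with ⟨t, ht⟩
      have hsq : a ^ 2 = 0 := by
        have : ((a.val * a.val : ℕ) : ZMod n) = 0 := by
          rw [ZMod.natCast_eq_zero_iff]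
          have hn4 : n = 4 * t := by omega
          exact ⟨t, by rw [ht, hn4]; ring⟩
        calc a ^ 2 = ((a.val * a.val : ℕ) : ZMod n) := by
              push_cast [ZMod.natCast_zmod_val]; ring
          _ = 0 := this
      calc a ^ k = a ^ 2 * a ^ (k - 2) := by rw [← pow_add]; congr 1; omega
        _ = 0 := by rw [hsq, zero_mul]
  · intro a; exact Finset.mem_univ _
  · intro a; exact neg_neg a

-- case n % 4 = 2 : sum is nonzero
lemma sum_pow_ne_zero (n k : ℕ) [NeZero n] (hk : Odd k) (hk3 : 3 ≤ k) (h4 : n % 4 = 2) :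
    ∑ x : ZMod n, x ^ k ≠ 0 := by
  obtain ⟨m, hm⟩ : ∃ m, n = 2 * m := ⟨n / 2, by omega⟩
  have hmodd : m % 2 = 1 := by omega
  have hmpos : 0 < m := by omega
  set μ : ZMod n := ((m : ℕ) : ZMod n) with hμ
  have hμμ : μ + μ = 0 := by
    rw [hμ, ← Nat.cast_add, show m + m = n by omega, ZMod.natCast_self]
  have hsplit : ∑ x : ZMod n, x ^ k = (∑ x ∈ Finset.univ.erase μ, x ^ k) + μ ^ k :=
    (Finset.sum_erase_add _ _ (Finset.mem_univ μ)).symm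
  have herase : ∑ x ∈ Finset.univ.erase μ, x ^ k = 0 := by
    apply Finset.sum_involution (fun a _ => -a)
    · intro a _
      rw [Odd.neg_pow hk]; ring
    · intro a ha hne
      intro heq
      apply hne
      rcases neg_eq_self_val n a heq with h0 | h2
      · have : a = 0 := by
          have := ZMod.natCast_zmod_val a
          rw [h0] at this
          simpa using this.symm
        rw [this]; exact zero_pow (by omega)
      · exfalso
        have hval : a.val = m := by omega
        have : a = μ := by
          rw [hμ, ← hval, ZMod.natCast_zmod_val]
        exact (Finset.mem_erase.mp ha).1 this
    · intro a _; exact neg_neg a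
    · intro a ha
      rw [Finset.mem_erase]
      refine ⟨?_, Finset.mem_univ _⟩
      intro hcon
      apply (Finset.mem_erase.mp ha).1
      have : a = -μ := by rw [← hcon, neg_neg]
      rw [this, neg_eq_iff_add_eq_zero, hμμ]
  have hμk : μ ^ k = μ := by
    have hdvd : (n : ℤ) ∣ (m : ℤ) ^ k - m := by
      have h2 : (2 : ℤ) ∣ (m : ℤ) ^ (k - 1) - 1 := by
        have : Odd ((m : ℤ) ^ (k - 1)) := (Int.odd_pow' (by omega)).mpr (by
          rw [Int.odd_iff]; omega)
        rcases this with ⟨c, hc⟩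
        exact ⟨c, by omega⟩
      have hfact : (m : ℤ) ^ k - m = m * ((m : ℤ) ^ (k - 1) - 1) := by
        rw [mul_sub, mul_one, ← pow_succ']
        congr 2
        omega
      rw [hfact, hm]
      push_cast
      rcases h2 with ⟨c, hc⟩
      exact ⟨c, by rw [hc]; ring⟩
    have : (((m : ℤ) ^ k - m : ℤ) : ZMod n) = 0 := by
      rw [ZMod.intCast_zmod_eq_zero_iff_dvd]
      exact_mod_cast hdvd
    push_cast at this
    rw [hμ]
    rw [sub_eq_zero] at this
    exact this
  have hμne : μ ≠ 0 := by
    rw [hμ, Ne, ZMod.natCast_eq_zero_iff]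
    intro hd
    have := Nat.le_of_dvd hmpos hd
    omega
  rw [hsplit, herase, zero_add, hμk]
  exact hμne

theorem stmt_3 (n k : ℕ) (hn : 1 ≤ n) (hk : Odd k) (hk3 : 3 ≤ k) :
    (∃ m : ℤ, ((∑ j ∈ Finset.Icc 1 n, j ^ k : ℕ) : ℚ) / (n : ℚ) = (m : ℚ)) ↔ n % 4 ≠ 2 := by
  have : NeZero n := ⟨by omega⟩
  have hnQ : (n : ℚ) ≠ 0 := by exact_mod_cast (by omega : n ≠ 0)
  have hdvd_iff : (∃ m : ℤ, ((∑ j ∈ Finset.Icc 1 n, j ^ k : ℕ) : ℚ) / (n : ℚ) = (m : ℚ)) ↔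
      n ∣ ∑ j ∈ Finset.Icc 1 n, j ^ k := by
    constructor
    · rintro ⟨m, hmh⟩
      rw [div_eq_iff hnQ] at hmh
      have hZ : ((∑ j ∈ Finset.Icc 1 n, j ^ k : ℕ) : ℤ) = m * n := by exact_mod_cast hmh
      have : (n : ℤ) ∣ ((∑ j ∈ Finset.Icc 1 n, j ^ k : ℕ) : ℤ) := ⟨m, by linarith⟩
      exact_mod_cast this
    · rintro ⟨c, hc⟩
      exact ⟨c, by rw [hc]; push_cast; field_simp⟩
  rw [hdvd_iff]
  have hcast : ((∑ j ∈ Finset.Icc 1 n, j ^ k : ℕ) : ZMod n) = ∑ x : ZMod n, x ^ k :=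
    cast_sum_eq n k (by omega)
  rw [← ZMod.natCast_eq_zero_iff, hcast]
  constructor
  · intro h h4
    exact sum_pow_ne_zero n k hk hk3 h4 h
  · intro h4
    exact sum_pow_eq_zero n k hk hk3 h4
end

section
/- Let p be a prime with (p−1) not dividing k, a ≥ 1, and r ≥ 0. Then ∑_{m=rp^a+1}^{(r+1)p^a} m^k ≡ 0 (mod p^a). -/
theorem stmt_10 (p k a r : ℕ) (hp : p.Prime) (hk : 0 < k) (hnd : ¬ (p - 1) ∣ k) (ha : 1 ≤ a) :
    (p ^ a : ℕ) ∣ ∑ m ∈ Finset.Icc (r * p ^ a + 1) ((r + 1) * p ^ a), m ^ k := by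
  haveI : Fact p.Prime := ⟨hp⟩
  haveI : NeZero (p ^ a) := ⟨pow_ne_zero a hp.pos.ne'⟩
  -- the cast ring hom to ZMod p
  set f : ZMod (p ^ a) →+* ZMod p := ZMod.castHom (dvd_pow_self p (by omega : a ≠ 0)) (ZMod p)
    with hf
  have hunit : ∀ x : ZMod (p ^ a), f x ≠ 0 → IsUnit x := by
    intro x hx
    have hv : ((x.val : ℕ) : ZMod (p ^ a)) = x := ZMod.natCast_rightInverse x
    rw [← hv, ZMod.isUnit_iff_coprime, Nat.coprime_pow_right_iff (by omega),
      Nat.coprime_comm, hp.coprime_iff_not_dvd]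
    intro hdvd
    apply hx
    have h0 : ((x.val : ℕ) : ZMod p) = 0 := (ZMod.natCast_eq_zero_iff _ _).mpr hdvd
    rw [ZMod.natCast_val] at h0
    rw [hf, ZMod.castHom_apply]
    exact h0
  -- generator of the units of ZMod p
  obtain ⟨g, hg⟩ := IsCyclic.exists_generator (α := (ZMod p)ˣ)
  have hord : orderOf g = p - 1 := by
    rw [orderOf_eq_card_of_forall_mem_zpowers hg, Nat.card_eq_fintype_card, ZMod.card_units]
  have hgk : g ^ k ≠ 1 := fun h => hnd (hord ▸ orderOf_dvd_of_pow_eq_one h)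
  -- lift g to ZMod (p ^ a)
  set c : ZMod (p ^ a) := (((g : ZMod p).val : ℕ) : ZMod (p ^ a)) with hc
  have hfc : f c = (g : ZMod p) := by
    rw [hc, map_natCast f]
    exact ZMod.natCast_rightInverse _
  have hcu : IsUnit c := hunit c (by rw [hfc]; exact g.ne_zero)
  have hyu : IsUnit (c ^ k - 1) := by
    apply hunit
    rw [map_sub, map_pow, map_one, hfc, sub_ne_zero]
    intro h
    apply hgk
    exact Units.val_eq_one.mp (by rw [Units.val_pow_eq_pow_val]; exact h)
  -- the full power sum over ZMod (p ^ a) vanishes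
  have hS : ∑ x : ZMod (p ^ a), x ^ k = 0 := by
    have h1 : ∑ x : ZMod (p ^ a), (c * x) ^ k = ∑ x : ZMod (p ^ a), x ^ k :=
      Fintype.sum_bijective _ (IsUnit.isUnit_iff_mulLeft_bijective.mp hcu)
        (fun x => (c * x) ^ k) (fun x => x ^ k) (fun x => rfl)
    have h2 : (c ^ k - 1) * ∑ x : ZMod (p ^ a), x ^ k = 0 := by
      rw [sub_mul, one_mul, sub_eq_zero, Finset.mul_sum]
      simp_rw [← mul_pow]
      exact h1
    exact (hyu.mul_right_eq_zero).mp h2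
  -- reindex the sum over the interval
  rw [← ZMod.natCast_eq_zero_iff]
  push_cast
  rw [show (r + 1) * p ^ a = r * p ^ a + p ^ a by ring, ← Finset.Ico_add_one_right_eq_Icc, Finset.sum_Ico_eq_sum_range,
    show r * p ^ a + p ^ a + 1 - (r * p ^ a + 1) = p ^ a by omega]
  have hz : ((p : ZMod (p ^ a))) ^ a = 0 := by
    have h := ZMod.natCast_self (p ^ a)
    push_cast at h
    exact h
  have hterm : ∀ i : ℕ, ((r : ZMod (p ^ a)) * (p : ZMod (p ^ a)) ^ a + 1 + (i : ZMod (p ^ a))) ^ k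
      = ((i : ZMod (p ^ a)) + 1) ^ k := by
    intro i
    rw [hz]
    ring
  push_cast
  simp_rw [hterm]
  -- sum over range (p ^ a) equals sum over ZMod (p ^ a)
  have hbij : Function.Bijective (fun i : Fin (p ^ a) => ((i : ℕ) : ZMod (p ^ a))) := by
    rw [Fintype.bijective_iff_injective_and_card]
    constructor
    · intro i j h
      apply Fin.ext
      have := congrArg ZMod.val h
      simpa [ZMod.val_cast_of_lt i.2, ZMod.val_cast_of_lt j.2] using this
    · rw [ZMod.card, Fintype.card_fin]
  have hre : ∑ i ∈ Finset.range (p ^ a), ((i : ZMod (p ^ a)) + 1) ^ k = ∑ x : ZMod (p ^ a), (x + 1) ^ k := by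
    rw [← Fin.sum_univ_eq_sum_range (fun i => ((i : ZMod (p ^ a)) + 1) ^ k)]
    exact Fintype.sum_bijective _ hbij _ _ (fun i => rfl)
  rw [hre]
  have hshift : ∑ x : ZMod (p ^ a), (x + 1) ^ k = ∑ x : ZMod (p ^ a), x ^ k :=
    Fintype.sum_bijective _ (Equiv.addRight (1 : ZMod (p ^ a))).bijective
      (fun x => (x + 1) ^ k) (fun x => x ^ k) (fun x => rfl)
  rw [hshift, hS]
end

section
/- Let n be a positive integer and k ≥ 2 even. If every prime p dividing n satisfies (p−1) ∤ k, then n divides S_k(n) = 1^k + ... + n^k. -/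
open Finset

lemma aux_periodic (m k : ℕ) (hm0 : 0 < m) (hm : m ∣ ∑ j ∈ range m, j ^ k) :
    ∀ t : ℕ, m ∣ ∑ j ∈ range (m * t), j ^ k := by
  haveI : NeZero m := ⟨hm0.ne'⟩
  have hmz : (∑ j ∈ range m, (j : ZMod m) ^ k) = 0 := by
    have := (ZMod.natCast_eq_zero_iff _ m).mpr hm
    push_cast at this
    exact this
  intro t
  rw [← ZMod.natCast_eq_zero_iff]
  induction t with
  | zero => simp
  | succ t ih =>
      have hsplit : range (m * (t + 1)) = range (m * t) ∪ Ico (m * t) (m * (t + 1)) := by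
        rw [range_eq_Ico, range_eq_Ico,
          Finset.Ico_union_Ico_eq_Ico (Nat.zero_le _) (Nat.mul_le_mul_left m (Nat.le_add_right t 1))]
      have hdisj : Disjoint (range (m * t)) (Ico (m * t) (m * (t + 1))) := by
        rw [range_eq_Ico]
        exact Finset.Ico_disjoint_Ico_consecutive 0 (m * t) (m * (t + 1))
      rw [hsplit, Finset.sum_union hdisj, Nat.cast_add, ih, zero_add]
      have hmm : m * (t + 1) - m * t = m := by
        have h1 : m * (t + 1) = m * t + m := by ring
        omega
      rw [Finset.sum_Ico_eq_sum_range, hmm, ← hmz, Nat.cast_sum]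
      apply Finset.sum_congr rfl
      intro i _
      push_cast
      simp [ZMod.natCast_self]

lemma aux_units_sum (p m k : ℕ) [NeZero m] (hp : p.Prime) (hpm : p ∣ m)
    (hcop : ∀ q : ℕ, q.Prime → q ∣ m → q = p)
    (hnd : ¬ (p - 1) ∣ k) :
    (∑ u : (ZMod m)ˣ, ((u : ZMod m)) ^ k) = 0 := by
  haveI : Fact p.Prime := ⟨hp⟩
  -- a unit of ZMod p whose k-th power is not 1
  have hv : ∃ v : (ZMod p)ˣ, v ^ k ≠ 1 := by
    by_contra hc
    push_neg at hc
    have hdvd := Monoid.exponent_dvd_of_forall_pow_eq_one hc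
    rw [IsCyclic.exponent_eq_card] at hdvd
    have hcard : Nat.card (ZMod p)ˣ = p - 1 := by
      rw [Nat.card_eq_fintype_card, ZMod.card_units_eq_totient, Nat.totient_prime hp]
    rw [hcard] at hdvd
    exact hnd hdvd
  obtain ⟨v, hvk⟩ := hv
  obtain ⟨u, hu⟩ := ZMod.unitsMap_surjective hpm v
  set S := ∑ u : (ZMod m)ˣ, ((u : ZMod m)) ^ k with hS
  have h1 : ((u : ZMod m)) ^ k * S = S := by
    rw [hS, Finset.mul_sum]
    apply Fintype.sum_equiv (Equiv.mulLeft u)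
    intro w
    simp [Units.val_mul, mul_pow]
  have h2 : (((u : ZMod m)) ^ k - 1) * S = 0 := by
    rw [sub_mul, one_mul, h1, sub_self]
  -- (u^k - 1) is a unit
  set y : ZMod m := ((u : ZMod m)) ^ k - 1 with hy
  have hyu : IsUnit y := by
    have hval : ((y.val : ℕ) : ZMod p) ≠ 0 := by
      have hcast : ((y.val : ℕ) : ZMod p) = ZMod.castHom hpm (ZMod p) y := by
        rw [ZMod.castHom_apply, ← ZMod.natCast_val]
      rw [hcast]
      have : ZMod.castHom hpm (ZMod p) y = ((v : ZMod p)) ^ k - 1 := by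
        rw [hy]
        have : (ZMod.castHom hpm (ZMod p)) ((u : ZMod m)) = (v : ZMod p) := by
          rw [← hu, ZMod.unitsMap_def]
          rfl
        rw [map_sub, map_pow, map_one, this]
      rw [this]
      intro hzero
      apply hvk
      have : ((v : ZMod p)) ^ k = 1 := by
        have := sub_eq_zero.mp hzero
        exact this
      ext
      push_cast
      exact this
    have hpdvd : ¬ p ∣ y.val := fun hd => hval ((ZMod.natCast_eq_zero_iff _ p).mpr hd)
    have hcp : y.val.Coprime m := by
      by_contra hnc
      obtain ⟨q, hq, hq1, hq2⟩ := Nat.Prime.not_coprime_iff_dvd.mp hnc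
      exact hpdvd ((hcop q hq hq2) ▸ hq1)
    have := (ZMod.isUnit_iff_coprime y.val m).mpr hcp
    rwa [ZMod.natCast_val, ZMod.cast_id] at this
  rw [← (hyu.mul_right_eq_zero), hy]
  exact h2

lemma aux_prime_pow (p k : ℕ) (hp : p.Prime) (hk1 : 1 ≤ k) (hnd : ¬ (p - 1) ∣ k) :
    ∀ a : ℕ, p ^ a ∣ ∑ j ∈ range (p ^ a), j ^ k := by
  intro a
  induction a with
  | zero => simpa using one_dvd _
  | succ a ih =>
      classical
      set m := p ^ (a + 1) with hmdef
      haveI : NeZero m := ⟨(pow_pos hp.pos (a+1)).ne'⟩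
      have hpm : p ∣ m := dvd_pow_self p (Nat.succ_ne_zero a)
      have hcop : ∀ q : ℕ, q.Prime → q ∣ m → q = p := by
        intro q hq hqm
        exact (Nat.prime_dvd_prime_iff_eq hq hp).mp (hq.dvd_of_dvd_pow hqm)
      rw [← ZMod.natCast_eq_zero_iff]
      rw [← Finset.sum_filter_add_sum_filter_not (range m) (fun j => p ∣ j), Nat.cast_add]
      have part1 : ((∑ j ∈ (range m).filter (fun j => p ∣ j), j ^ k : ℕ) : ZMod m) = 0 := by
        rw [ZMod.natCast_eq_zero_iff]
        have himg : (range m).filter (fun j => p ∣ j) = (range (p ^ a)).image (fun i => p * i) := by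
          ext j
          simp only [Finset.mem_filter, Finset.mem_range, Finset.mem_image]
          constructor
          · rintro ⟨hjm, i, rfl⟩
            refine ⟨i, ?_, rfl⟩
            have : p * i < p * p ^ a := by
              rw [hmdef, pow_succ'] at hjm
              exact hjm
            exact Nat.lt_of_mul_lt_mul_left this
          · rintro ⟨i, hi, rfl⟩
            refine ⟨?_, ⟨i, rfl⟩⟩
            rw [hmdef, pow_succ']
            exact mul_lt_mul_of_pos_left hi hp.pos
        rw [himg, Finset.sum_image (fun a _ b _ h => Nat.eq_of_mul_eq_mul_left hp.pos h)]
        have : (∑ i ∈ range (p ^ a), (p * i) ^ k) = p ^ k * ∑ i ∈ range (p ^ a), i ^ k := by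
          rw [Finset.mul_sum]
          exact Finset.sum_congr rfl fun i _ => by rw [mul_pow]
        rw [this, hmdef, pow_succ']
        exact mul_dvd_mul (dvd_pow_self p (by omega)) ih
      have part2 : ((∑ j ∈ (range m).filter (fun j => ¬ p ∣ j), j ^ k : ℕ) : ZMod m) = 0 := by
        push_cast
        rw [← aux_units_sum p m k hp hpm hcop hnd]
        have hunit : ∀ j ∈ (range m).filter (fun j => ¬ p ∣ j), IsUnit ((j : ℕ) : ZMod m) := by
          intro j hj
          rw [Finset.mem_filter, Finset.mem_range] at hj
          rw [ZMod.isUnit_iff_coprime]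
          by_contra hnc
          obtain ⟨q, hq, hq1, hq2⟩ := Nat.Prime.not_coprime_iff_dvd.mp hnc
          exact hj.2 ((hcop q hq hq2) ▸ hq1)
        refine Finset.sum_nbij'
          (i := fun j => if h : IsUnit ((j : ℕ) : ZMod m) then h.unit else 1)
          (j := fun u => ((u : ZMod m)).val) ?_ ?_ ?_ ?_ ?_
        · intro j _; exact Finset.mem_univ _
        · intro u _
          rw [Finset.mem_filter, Finset.mem_range]
          refine ⟨ZMod.val_lt _, ?_⟩
          intro hpd
          have hc := ZMod.val_coe_unit_coprime u
          have : p ∣ Nat.gcd ((u : ZMod m)).val m := Nat.dvd_gcd hpd hpm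
          rw [hc] at this
          exact hp.one_lt.ne' (Nat.eq_one_of_dvd_one this)
        · intro j hj
          simp only [dif_pos (hunit j hj), IsUnit.unit_spec]
          exact ZMod.val_cast_of_lt (Finset.mem_range.mp (Finset.mem_filter.mp hj).1)
        · intro u _
          have hcast : ((((u : ZMod m)).val : ℕ) : ZMod m) = (u : ZMod m) := by
            rw [ZMod.natCast_val, ZMod.cast_id]
          have hu : IsUnit ((((u : ZMod m)).val : ℕ) : ZMod m) := by
            rw [hcast]; exact u.isUnit
          simp only [dif_pos hu]
          ext
          rw [IsUnit.unit_spec, hcast]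
        · intro j hj
          simp only [dif_pos (hunit j hj), IsUnit.unit_spec]
      rw [part1, part2, add_zero]

theorem stmt_11 (n k : ℕ) (hn : 0 < n) (hk : 2 ≤ k) (hke : Even k)
    (h : ∀ p : ℕ, p.Prime → p ∣ n → ¬ (p - 1) ∣ k) :
    n ∣ ∑ j ∈ Finset.Icc 1 n, j ^ k := by
  have key : n ∣ ∑ j ∈ range n, j ^ k := by
    rw [Nat.dvd_iff_prime_pow_dvd_dvd]
    intro p a hp hpa
    have hp' : p.Prime := hp
    rcases Nat.eq_zero_or_pos a with rfl | ha
    · simpa using one_dvd _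
    · have hpn : p ∣ n := dvd_trans (dvd_pow_self p ha.ne') hpa
      have hnd := h p hp' hpn
      obtain ⟨t, rfl⟩ := hpa
      exact aux_periodic (p ^ a) k (pow_pos hp'.pos a)
        (aux_prime_pow p k hp' (by omega) hnd a) t
  have hrw : ∑ j ∈ Finset.Icc 1 n, j ^ k = ∑ j ∈ range n, j ^ k + n ^ k := by
    rw [← Finset.Ico_add_one_right_eq_Icc, Finset.sum_Ico_eq_sum_range]
    simp only [Nat.add_sub_cancel]
    calc ∑ i ∈ range n, (1 + i) ^ k
        = ∑ i ∈ range (n + 1), i ^ k := by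
          rw [Finset.sum_range_succ']
          have h0 : (0 : ℕ) ^ k = 0 := Nat.zero_pow (by omega)
          rw [h0, add_zero]
          exact Finset.sum_congr rfl fun i _ => by rw [add_comm]
      _ = ∑ j ∈ range n, j ^ k + n ^ k := Finset.sum_range_succ _ n
  rw [hrw]
  exact Nat.dvd_add key (dvd_pow_self n (by omega))
end

section
/- Let n be a positive integer and k ≥ 2 even. If some prime p divides n with (p−1) | k, then n does not divide S_k(n) = 1^k + ... + n^k. -/
open Finset

private def Tsum (k N : ℕ) : ℤ := ∑ j ∈ Finset.range N, (j : ℤ) ^ k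

private lemma sum_modEq {α : Type*} (s : Finset α) (f g : α → ℤ) (d : ℤ)
    (h : ∀ i ∈ s, f i ≡ g i [ZMOD d]) :
    ∑ i ∈ s, f i ≡ ∑ i ∈ s, g i [ZMOD d] := by
  induction s using Finset.cons_induction with
  | empty => simp
  | cons a s ha ih =>
    simp only [Finset.sum_cons]
    exact (h a (Finset.mem_cons_self _ _)).add
      (ih (fun i hi => h i (Finset.mem_cons_of_mem hi)))

private lemma pow_add_modEq (x y : ℤ) (n : ℕ) :
    (x + y) ^ (n + 1) ≡ x ^ (n + 1) + (n + 1) * x ^ n * y [ZMOD y ^ 2] := by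
  induction n with
  | zero => simp [Int.ModEq.refl]
  | succ n ih =>
    have h1 : (x + y) ^ (n + 2) = (x + y) ^ (n + 1) * (x + y) := by ring
    have h2 : (x ^ (n + 1) + ((n : ℤ) + 1) * x ^ n * y) * (x + y)
        ≡ x ^ (n + 2) + ((n : ℤ) + 2) * x ^ (n + 1) * y [ZMOD y ^ 2] := by
      refine Int.ModEq.symm (Int.modEq_iff_dvd.mpr ⟨((n : ℤ) + 1) * x ^ n, ?_⟩)
      ring
    have h3 := (ih.mul_right (x + y)).trans h2
    rw [h1]
    convert h3 using 2 <;> push_cast <;> ring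

private lemma Tsum_blocks (k c d : ℕ) :
    Tsum k (c * d) = ∑ m ∈ range c, ∑ i ∈ range d, ((m * d + i : ℕ) : ℤ) ^ k := by
  induction c with
  | zero => simp [Tsum]
  | succ c ih =>
    have : (c + 1) * d = c * d + d := by ring
    rw [Tsum, this, Finset.sum_range_add, ← Tsum, ih, Finset.sum_range_succ]

private lemma Tsum_mul (k d c : ℕ) :
    Tsum k (c * d) ≡ (c : ℤ) * Tsum k d [ZMOD (d : ℤ)] := by
  rw [Tsum_blocks]
  have h : ∀ m ∈ range c, (∑ i ∈ range d, ((m * d + i : ℕ) : ℤ) ^ k)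
      ≡ Tsum k d [ZMOD (d : ℤ)] := by
    intro m _
    refine sum_modEq _ _ _ _ (fun i _ => ?_)
    have : ((m * d + i : ℕ) : ℤ) ≡ (i : ℤ) [ZMOD (d : ℤ)] := by
      refine Int.modEq_iff_dvd.mpr ⟨-(m : ℤ), ?_⟩
      push_cast; ring
    exact this.pow k
  have := sum_modEq (range c) _ (fun _ => Tsum k d) _ h
  simpa [Finset.sum_const, Finset.card_range, nsmul_eq_mul] using this

private lemma Tsum_step (p k a : ℕ) (hp : p.Prime) (hke : Even k) (hk : 1 ≤ k)
    (ha : 1 ≤ a) :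
    Tsum k (p ^ (a + 1)) ≡ (p : ℤ) * Tsum k (p ^ a) [ZMOD (p : ℤ) ^ (a + 1)] := by
  have hpow : p ^ (a + 1) = p * p ^ a := by ring
  rw [hpow, Tsum_blocks]
  have key : ∀ m ∈ range p, ∀ i ∈ range (p ^ a),
      ((m * p ^ a + i : ℕ) : ℤ) ^ k
        ≡ (i : ℤ) ^ k + (k : ℤ) * (i : ℤ) ^ (k - 1) * ((m : ℤ) * (p : ℤ) ^ a)
          [ZMOD (p : ℤ) ^ (a + 1)] := by
    intro m _ i _
    obtain ⟨k', rfl⟩ : ∃ k', k = k' + 1 := ⟨k - 1, (Nat.succ_pred_eq_of_pos hk).symm⟩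
    have hb := pow_add_modEq (i : ℤ) ((m : ℤ) * (p : ℤ) ^ a) k'
    have hdvd : ((p : ℤ)) ^ (a + 1) ∣ ((m : ℤ) * (p : ℤ) ^ a) ^ 2 := by
      have h1 : ((p : ℤ)) ^ (a + 1) ∣ ((p : ℤ) ^ a) ^ 2 := by
        rw [← pow_mul]
        exact pow_dvd_pow _ (by omega)
      exact h1.trans (by rw [mul_pow]; exact dvd_mul_left _ _)
    have hb' := hb.of_dvd hdvd
    have hcast : ((m * p ^ a + i : ℕ) : ℤ) = (i : ℤ) + (m : ℤ) * (p : ℤ) ^ a := by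
      push_cast; ring
    rw [hcast]
    simpa using hb'
  have hsum : (∑ m ∈ range p, ∑ i ∈ range (p ^ a), ((m * p ^ a + i : ℕ) : ℤ) ^ k)
      ≡ ∑ m ∈ range p, ∑ i ∈ range (p ^ a),
          ((i : ℤ) ^ k + (k : ℤ) * (i : ℤ) ^ (k - 1) * ((m : ℤ) * (p : ℤ) ^ a))
        [ZMOD (p : ℤ) ^ (a + 1)] :=
    sum_modEq _ _ _ _ (fun m hm => sum_modEq _ _ _ _ (fun i hi => key m hm i hi))
  set W : ℤ := ∑ i ∈ range (p ^ a), (i : ℤ) ^ (k - 1) with hW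
  have e1 : ∀ m : ℕ, (∑ i ∈ range (p ^ a),
        ((i : ℤ) ^ k + (k : ℤ) * (i : ℤ) ^ (k - 1) * ((m : ℤ) * (p : ℤ) ^ a)))
      = Tsum k (p ^ a) + ((k : ℤ) * (p : ℤ) ^ a * W) * (m : ℤ) := by
    intro m
    rw [Finset.sum_add_distrib, Tsum]
    congr 1
    rw [hW, Finset.mul_sum, Finset.sum_mul]
    exact Finset.sum_congr rfl (fun i _ => by ring)
  have heval : (∑ m ∈ range p, ∑ i ∈ range (p ^ a),
        ((i : ℤ) ^ k + (k : ℤ) * (i : ℤ) ^ (k - 1) * ((m : ℤ) * (p : ℤ) ^ a)))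
      = (p : ℤ) * Tsum k (p ^ a)
        + ((k : ℤ) * (p : ℤ) ^ a * W) * (∑ m ∈ range p, (m : ℤ)) := by
    calc (∑ m ∈ range p, ∑ i ∈ range (p ^ a),
          ((i : ℤ) ^ k + (k : ℤ) * (i : ℤ) ^ (k - 1) * ((m : ℤ) * (p : ℤ) ^ a)))
        = ∑ m ∈ range p, (Tsum k (p ^ a) + ((k : ℤ) * (p : ℤ) ^ a * W) * (m : ℤ)) :=
          Finset.sum_congr rfl (fun m _ => e1 m)
      _ = (p : ℤ) * Tsum k (p ^ a)
          + ((k : ℤ) * (p : ℤ) ^ a * W) * (∑ m ∈ range p, (m : ℤ)) := by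
          rw [Finset.sum_add_distrib, Finset.sum_const, Finset.card_range,
            ← Finset.mul_sum]
          push_cast
          ring
  have hzero : ((p : ℤ)) ^ (a + 1) ∣ ((k : ℤ) * (p : ℤ) ^ a * W)
      * (∑ m ∈ range p, (m : ℤ)) := by
    have hG : (p : ℤ) ∣ (k : ℤ) * (∑ m ∈ range p, (m : ℤ)) := by
      rcases hp.eq_two_or_odd' with h2 | hodd
      · subst h2
        obtain ⟨t, rfl⟩ := hke
        have : ((2 : ℕ) : ℤ) ∣ ((t + t : ℕ) : ℤ) := ⟨(t : ℤ), by push_cast; ring⟩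
        exact this.mul_right _
      · have h2 : (∑ m ∈ range p, m) * 2 = p * (p - 1) := Finset.sum_range_id_mul_two p
        have hpd : p ∣ (∑ m ∈ range p, m) * 2 := h2 ▸ Dvd.intro _ rfl
        have hps : p ∣ ∑ m ∈ range p, m :=
          (Nat.Coprime.dvd_of_dvd_mul_right
            (Nat.coprime_two_right.mpr hodd) hpd)
        obtain ⟨t, ht⟩ := hps
        have hc : (∑ m ∈ range p, (m : ℤ)) = (p : ℤ) * t := by
          have : ((∑ m ∈ range p, m : ℕ) : ℤ) = ((p * t : ℕ) : ℤ) := by rw [ht]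
          push_cast at this
          rw [this]
        rw [hc]
        exact Dvd.dvd.mul_left ⟨(t : ℤ), rfl⟩ _
    have h1 : (p : ℤ) ^ (a + 1) ∣ ((p : ℤ) ^ a * ((k : ℤ) * (∑ m ∈ range p, (m : ℤ)))) := by
      rw [pow_succ]
      exact mul_dvd_mul_left _ hG
    exact h1.trans ⟨W, by ring⟩
  calc (∑ m ∈ range p, ∑ i ∈ range (p ^ a), ((m * p ^ a + i : ℕ) : ℤ) ^ k)
      ≡ (p : ℤ) * Tsum k (p ^ a)
        + ((k : ℤ) * (p : ℤ) ^ a * W) * (∑ m ∈ range p, (m : ℤ))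
          [ZMOD (p : ℤ) ^ (a + 1)] := by rw [← heval]; exact hsum
    _ ≡ (p : ℤ) * Tsum k (p ^ a) + 0 [ZMOD (p : ℤ) ^ (a + 1)] :=
        Int.ModEq.add_left _ ((Int.modEq_zero_iff_dvd).mpr hzero)
    _ = (p : ℤ) * Tsum k (p ^ a) := by ring

private lemma Tsum_prime (p k : ℕ) (hp : p.Prime) (hk : 1 ≤ k) (hd : (p - 1) ∣ k) :
    Tsum k p ≡ -1 [ZMOD (p : ℤ)] := by
  have hsplit : Tsum k p = (0 : ℤ) ^ k + ∑ j ∈ Finset.Ico 1 p, (j : ℤ) ^ k := by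
    rw [Tsum, Finset.range_eq_Ico, Finset.sum_eq_sum_Ico_succ_bot hp.pos]
    norm_num
  rw [hsplit, zero_pow (by omega), zero_add]
  have hterm : ∀ j ∈ Finset.Ico 1 p, ((j : ℤ)) ^ k ≡ 1 [ZMOD (p : ℤ)] := by
    intro j hj
    simp only [Finset.mem_Ico] at hj
    have hcop : IsCoprime ((j : ℤ)) ((p : ℤ)) :=
      Nat.isCoprime_iff_coprime.mpr
        (Nat.Coprime.symm ((hp.coprime_iff_not_dvd).mpr
          (Nat.not_dvd_of_pos_of_lt (by omega) hj.2)))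
    obtain ⟨m, rfl⟩ := hd
    calc (j : ℤ) ^ ((p - 1) * m) = ((j : ℤ) ^ (p - 1)) ^ m := by rw [pow_mul]
      _ ≡ 1 ^ m [ZMOD (p : ℤ)] := (Int.ModEq.pow_card_sub_one_eq_one hp hcop).pow m
      _ = 1 := one_pow m
  have hs := sum_modEq _ _ (fun _ => (1 : ℤ)) _ hterm
  calc ∑ j ∈ Finset.Ico 1 p, (j : ℤ) ^ k
      ≡ ∑ _j ∈ Finset.Ico 1 p, (1 : ℤ) [ZMOD (p : ℤ)] := hs
    _ = ((p - 1 : ℕ) : ℤ) := by rw [Finset.sum_const, Nat.card_Ico]; simp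
    _ ≡ -1 [ZMOD (p : ℤ)] := by
        refine Int.modEq_iff_dvd.mpr ⟨-1, ?_⟩
        have h1 : (1 : ℕ) ≤ p := hp.pos
        push_cast [h1]
        ring

private lemma Tsum_pow (p k a : ℕ) (hp : p.Prime) (hke : Even k) (hk : 1 ≤ k)
    (hd : (p - 1) ∣ k) :
    Tsum k (p ^ (a + 1)) ≡ -((p : ℤ) ^ a) [ZMOD (p : ℤ) ^ (a + 1)] := by
  induction a with
  | zero => simpa using Tsum_prime p k hp hk hd
  | succ a ih =>
    have h1 := Tsum_step p k (a + 1) hp hke hk (by omega)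
    have h2 : (p : ℤ) * Tsum k (p ^ (a + 1)) ≡ (p : ℤ) * (-((p : ℤ) ^ a))
        [ZMOD (p : ℤ) * (p : ℤ) ^ (a + 1)] := ih.mul_left' (c := (p : ℤ))
    have h3 : (p : ℤ) * (p : ℤ) ^ (a + 1) = (p : ℤ) ^ (a + 2) := by ring
    have h4 : (p : ℤ) * (-((p : ℤ) ^ a)) = -((p : ℤ) ^ (a + 1)) := by ring
    rw [h3, h4] at h2
    exact h1.trans h2

theorem stmt_12 (n k : ℕ) (hn : 0 < n) (hk : 2 ≤ k) (hke : Even k)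
    (h : ∃ p : ℕ, p.Prime ∧ p ∣ n ∧ (p - 1) ∣ k) :
    ¬ n ∣ ∑ j ∈ Finset.Icc 1 n, j ^ k := by
  obtain ⟨p, hp, hpn, hpk⟩ := h
  intro hdvd
  -- pass to integers
  have hdvdZ : (n : ℤ) ∣ ∑ j ∈ Finset.Icc 1 n, (j : ℤ) ^ k := by
    have h := Int.natCast_dvd_natCast.mpr hdvd
    push_cast at h
    exact h
  -- relate to Tsum
  have hrel : (∑ j ∈ Finset.Icc 1 n, (j : ℤ) ^ k) = Tsum k n + (n : ℤ) ^ k := by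
    have h1 : Tsum k (n + 1) = Tsum k n + (n : ℤ) ^ k := by
      rw [Tsum, Finset.sum_range_succ, Tsum]
    have h2 : Tsum k (n + 1) = (0 : ℤ) ^ k + ∑ j ∈ Finset.Icc 1 n, (j : ℤ) ^ k := by
      rw [Tsum, Finset.range_eq_Ico, Finset.sum_eq_sum_Ico_succ_bot (by omega),
        Finset.Ico_add_one_right_eq_Icc]
      norm_num
    rw [← h1, h2, zero_pow (by omega), zero_add]
  set a : ℕ := n.factorization p with haa
  have ha : 1 ≤ a := hp.factorization_pos_of_dvd hn.ne' hpn
  obtain ⟨b, hb⟩ : ∃ b, a = b + 1 := ⟨a - 1, by omega⟩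
  set d : ℕ := p ^ a with hdd
  have hdn : d ∣ n := Nat.ordProj_dvd n p
  set m : ℕ := n / d with hmm
  have hnm : n = m * d := by
    rw [hmm, hdd, haa]
    rw [Nat.mul_comm]
    exact (Nat.ordProj_mul_ordCompl_eq_self n p).symm
  have hpm : ¬ p ∣ m := Nat.not_dvd_ordCompl hp hn.ne'
  -- reduce mod d
  have hdZ : (d : ℤ) ∣ (n : ℤ) := Int.natCast_dvd_natCast.mpr hdn
  have h0 : Tsum k n ≡ 0 [ZMOD (d : ℤ)] := by
    have hnk : (d : ℤ) ∣ (n : ℤ) ^ k := hdZ.trans (dvd_pow_self _ (by omega))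
    have hS : (d : ℤ) ∣ (Tsum k n + (n : ℤ) ^ k) := by
      rw [← hrel]; exact hdZ.trans hdvdZ
    exact Int.modEq_zero_iff_dvd.mpr (by
      have := dvd_sub hS hnk
      simpa using this)
  have h1 : Tsum k n ≡ (m : ℤ) * Tsum k d [ZMOD (d : ℤ)] := by
    rw [hnm]; exact Tsum_mul k d m
  have h2 : Tsum k d ≡ -((p : ℤ) ^ b) [ZMOD (d : ℤ)] := by
    rw [hdd, hb]
    exact_mod_cast Tsum_pow p k b hp hke (by omega) hpk
  have h3 : (0 : ℤ) ≡ (m : ℤ) * (-((p : ℤ) ^ b)) [ZMOD (d : ℤ)] :=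
    (h0.symm.trans h1).trans ((h2.mul_left (m : ℤ)))
  have h4 : (d : ℤ) ∣ (m : ℤ) * (p : ℤ) ^ b := by
    have := (Int.modEq_zero_iff_dvd).mp h3.symm
    obtain ⟨c, hc⟩ := this
    exact ⟨-c, by linarith [hc]⟩
  have h5 : ((p : ℤ) ^ b * (p : ℤ)) ∣ ((p : ℤ) ^ b * (m : ℤ)) := by
    have hd' : (d : ℤ) = (p : ℤ) ^ b * (p : ℤ) := by
      rw [hdd, hb]; push_cast; ring
    rw [← hd']
    exact (dvd_of_eq (by ring)).trans h4 |>.trans (dvd_of_eq (by ring))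
  have hp0 : ((p : ℤ) ^ b) ≠ 0 := pow_ne_zero _ (by exact_mod_cast hp.pos.ne')
  have h6 : (p : ℤ) ∣ (m : ℤ) := (mul_dvd_mul_iff_left hp0).mp h5
  exact hpm (Int.natCast_dvd_natCast.mp h6)
end

section
/- For even k ≥ 2, a prime p divides the denominator of the k-th Bernoulli number B_k if and only if (p−1) divides k (Von Staudt–Clausen). -/
open Finset

variable {p : ℕ} [hp : Fact p.Prime]

lemma den_dvd_iff_norm (q : ℚ) : p ∣ q.den ↔ 1 < padicNorm p q := by
  rcases eq_or_ne q 0 with rfl | hq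
  · simp [Nat.dvd_one, hp.out.ne_one, padicNorm.zero]
  · have hp1 : (1:ℚ) < p := by exact_mod_cast hp.out.one_lt
    have : (1:ℚ) < (p:ℚ) ^ (-padicValRat p q) ↔ padicValRat p q < 0 := by
      rw [show (1:ℚ) = (p:ℚ) ^ (0:ℤ) by simp, zpow_lt_zpow_iff_right₀ hp1]
      omega
    rw [padicNorm.eq_zpow_of_nonzero hq, this]
    unfold padicValRat
    constructor
    · intro hdvd
      have hnum : ¬ (p:ℤ) ∣ q.num := by
        intro hn
        have := Nat.Coprime.eq_one_of_dvd (Nat.Coprime.coprime_dvd_left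
          (Int.natCast_dvd_natCast.mp (by rwa [Int.dvd_natAbs]) ) q.reduced) hdvd
        exact hp.out.ne_one this
      rw [padicValInt.eq_zero_of_not_dvd hnum]
      have h1 : 1 ≤ padicValNat p q.den := by
        rcases ((padicValNat_dvd_iff 1 (p := p) q.den).mp (by simpa using hdvd)) with h | h
        · exact absurd h q.den_nz
        · exact h
      omega
    · intro hlt
      by_contra hnd
      rw [padicValNat.eq_zero_of_not_dvd hnd] at hlt
      omega

lemma two_mul_add_one_le_three_pow : ∀ t : ℕ, 2 * t + 1 ≤ 3 ^ t := by
  intro t; induction t with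
  | zero => simp
  | succ n ih => calc 2 * (n+1) + 1 = (2*n+1) + 2 := by ring
                  _ ≤ 3^n + 2 := by omega
                  _ ≤ 3^(n+1) := by have : 1 ≤ 3^n := Nat.one_le_pow _ _ (by norm_num); omega

lemma add_two_le_two_pow : ∀ t : ℕ, 2 ≤ t → t + 2 ≤ 2 ^ t := by
  intro t; induction t with
  | zero => omega
  | succ n ih =>
    intro h
    rcases Nat.lt_or_ge n 2 with h2 | h2
    · interval_cases n <;> simp_all <;> omega
    · have := ih h2
      have : 2^n ≥ 1 := Nat.one_le_pow _ _ (by norm_num)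
      calc n + 1 + 2 ≤ 2^n + 1 := by omega
        _ ≤ 2^(n+1) := by omega

lemma padicValNat_le_sub_two {m : ℕ} (h2 : 2 ≤ m) (hexc : ¬(p = 2 ∧ m = 2)) :
    padicValNat p m + 2 ≤ m := by
  by_contra hcon
  push_neg at hcon
  have hv : m - 1 ≤ padicValNat p m := by omega
  have hd : p ^ (m - 1) ∣ m := dvd_trans (pow_dvd_pow p hv) (pow_padicValNat_dvd)
  have hle : p ^ (m - 1) ≤ m := Nat.le_of_dvd (by omega) hd
  rcases eq_or_ne p 2 with rfl | hp2
  · have hm2 : m ≠ 2 := fun h => hexc ⟨rfl, h⟩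
    have hm3 : 3 ≤ m := by omega
    have := add_two_le_two_pow (m - 1) (by omega)
    omega
  · have hp3 : 3 ≤ p := (Nat.Prime.two_le hp.out).lt_of_ne (Ne.symm hp2)
    have h3 : 3 ^ (m-1) ≤ p ^ (m-1) := Nat.pow_le_pow_left hp3 _
    have := two_mul_add_one_le_three_pow (m - 1)
    omega

lemma padicNorm_natCast {m : ℕ} (hm : m ≠ 0) :
    padicNorm p m = (p:ℚ) ^ (-(padicValNat p m : ℤ)) := by
  rw [padicNorm.eq_zpow_of_nonzero (by exact_mod_cast hm), padicValRat.of_nat]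

lemma sum_pow_cast_zmod (k : ℕ) (hk : 1 ≤ k) :
    ((∑ i ∈ range p, i ^ k : ℕ) : ZMod p) = if (p - 1) ∣ k then -1 else 0 := by
  have hcard : Fintype.card (ZMod p) = p := ZMod.card p
  have h1 : ((∑ i ∈ range p, i ^ k : ℕ) : ZMod p) = ∑ i ∈ range p, (i : ZMod p) ^ k := by
    push_cast; rfl
  have h2 : ∑ i ∈ range p, (i : ZMod p) ^ k = ∑ x : ZMod p, x ^ k := by
    rw [← Fin.sum_univ_eq_sum_range (fun i => ((i : ℕ) : ZMod p) ^ k) p]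
    apply Fintype.sum_bijective (fun i : Fin p => ((i : ℕ) : ZMod p))
    · have : Function.Bijective (fun i : Fin p => ((i : ℕ) : ZMod p)) := by
        haveI : NeZero p := ⟨hp.out.pos.ne'⟩
        constructor
        · intro a b hab
          have : (a : ℕ) = (b : ℕ) := by
            have := congrArg ZMod.val hab
            simpa [ZMod.val_natCast, Nat.mod_eq_of_lt a.isLt, Nat.mod_eq_of_lt b.isLt] using this
          exact Fin.ext this
        · intro x
          exact ⟨⟨x.val, x.val_lt⟩, by simp [ZMod.natCast_rightInverse x]⟩
      exact this
    · intro i; rfl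
  have h3 : ∑ x : ZMod p, x ^ k = ∑ x : (ZMod p)ˣ, (x : ZMod p) ^ k := by
    classical
    let φ : (ZMod p)ˣ ↪ ZMod p := ⟨fun x ↦ x, Units.val_injective⟩
    have huniv : univ.map φ = univ \ {0} := by
      ext x
      simpa only [mem_map, mem_univ, Function.Embedding.coeFn_mk, true_and, mem_sdiff,
        mem_singleton, φ] using (⟨fun ⟨a, ha⟩ => ha ▸ a.ne_zero, fun h => ⟨Units.mk0 x h, rfl⟩⟩ : (∃ a : (ZMod p)ˣ, (a : ZMod p) = x) ↔ ¬x = 0)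
    calc ∑ x : ZMod p, x ^ k = ∑ x ∈ univ \ {(0 : ZMod p)}, x ^ k := by
          rw [← Finset.sum_sdiff ({0} : Finset (ZMod p)).subset_univ, Finset.sum_singleton,
            zero_pow (by omega), add_zero]
      _ = ∑ x : (ZMod p)ˣ, (x : ZMod p) ^ k := by
          rw [← huniv, Finset.sum_map]; rfl
  have h4 := FiniteField.sum_pow_units (ZMod p) k
  rw [h1, h2, h3, h4, hcard]

lemma padicValNat_le_sub_one {m : ℕ} (hm : 1 ≤ m) : padicValNat p m + 1 ≤ m := by
  by_contra hcon
  push_neg at hcon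
  have hv : m ≤ padicValNat p m := by omega
  have hd : p ^ m ∣ m := dvd_trans (pow_dvd_pow p hv) pow_padicValNat_dvd
  have hle : p ^ m ≤ m := Nat.le_of_dvd (by omega) hd
  have h2 : 2 ^ m ≤ p ^ m := Nat.pow_le_pow_left hp.out.two_le _
  have := Nat.lt_two_pow_self (n := m)
  omega

lemma term_bound {i m : ℕ} (hm : 1 ≤ m) (hB : padicNorm p (bernoulli i) ≤ p) (c : ℕ)
    (e : ℤ) (he : 1 - (m:ℤ) + (padicValNat p m : ℤ) ≤ e) :
    padicNorm p (bernoulli i * c * (p:ℚ) ^ m / m) ≤ (p:ℚ) ^ e := by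
  have hp0 : (0:ℚ) < p := by exact_mod_cast hp.out.pos
  have hp1 : (1:ℚ) ≤ p := by exact_mod_cast hp.out.one_le
  have hpm : padicNorm p ((p:ℚ) ^ m) = (p:ℚ) ^ (-(m:ℤ)) := by
    have : ((p ^ m : ℕ) : ℚ) = (p:ℚ) ^ m := by push_cast; ring
    rw [← this, padicNorm_natCast (pow_ne_zero m hp.out.ne_zero), padicValNat.prime_pow]
  have hmq : padicNorm p (m:ℚ) = (p:ℚ) ^ (-(padicValNat p m : ℤ)) :=
    padicNorm_natCast (by omega)
  rw [padicNorm.div, padicNorm.mul, padicNorm.mul, hpm, hmq]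
  have hc : padicNorm p (c:ℚ) ≤ 1 := padicNorm.of_nat c
  have hBnn : 0 ≤ padicNorm p (bernoulli i) := padicNorm.nonneg _
  have hcnn : 0 ≤ padicNorm p (c:ℚ) := padicNorm.nonneg _
  calc padicNorm p (bernoulli i) * padicNorm p (c:ℚ) * (p:ℚ) ^ (-(m:ℤ)) /
          (p:ℚ) ^ (-(padicValNat p m : ℤ))
      ≤ (p:ℚ) * 1 * (p:ℚ) ^ (-(m:ℤ)) / (p:ℚ) ^ (-(padicValNat p m : ℤ)) := by
        gcongr <;> positivity
    _ = (p:ℚ) ^ (1 - (m:ℤ) + (padicValNat p m : ℤ)) := by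
        rw [mul_one, show (1 - (m:ℤ) + (padicValNat p m:ℤ))
              = 1 + -(m:ℤ) - (-(padicValNat p m:ℤ)) by ring,
          zpow_sub₀ hp0.ne', zpow_add₀ hp0.ne', zpow_one]
    _ ≤ (p:ℚ) ^ e := zpow_le_zpow_right₀ hp1 he

lemma faulhaber_key (k : ℕ) (hk : 1 ≤ k) :
    (p:ℚ) * bernoulli k = ((∑ i ∈ range p, i ^ k : ℕ) : ℚ)
      - ∑ i ∈ range k, bernoulli i * (k.choose i) * (p:ℚ) ^ (k + 1 - i) / ((k + 1 - i : ℕ) : ℚ) := by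
  have h := sum_range_pow p k
  have hN : ((∑ i ∈ range p, i ^ k : ℕ) : ℚ) = ∑ j ∈ range p, (j:ℚ) ^ k := by push_cast; rfl
  rw [Finset.sum_range_succ] at h
  have htop : bernoulli k * (((k+1).choose k : ℕ) : ℚ) * (p:ℚ) ^ (k + 1 - k) / ((k:ℚ) + 1)
      = (p:ℚ) * bernoulli k := by
    rw [Nat.choose_succ_self_right, Nat.add_sub_cancel_left, pow_one]
    have : ((k:ℚ) + 1) ≠ 0 := by positivity
    field_simp
    push_cast; ring
  have hterms : ∀ i ∈ range k,
      bernoulli i * (((k+1).choose i : ℕ) : ℚ) * (p:ℚ) ^ (k + 1 - i) / ((k:ℚ) + 1)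
      = bernoulli i * (k.choose i) * (p:ℚ) ^ (k + 1 - i) / ((k + 1 - i : ℕ) : ℚ) := by
    intro i hi
    have hik : i < k := mem_range.mp hi
    have hc : ((k.choose i : ℚ)) * ((k:ℚ) + 1) = (((k+1).choose i : ℕ) : ℚ) * ((k + 1 - i : ℕ) : ℚ) := by
      exact_mod_cast congrArg (Nat.cast (R := ℚ)) (Nat.choose_mul_succ_eq k i)
    have h1 : ((k:ℚ) + 1) ≠ 0 := by positivity
    have h2 : ((k + 1 - i : ℕ) : ℚ) ≠ 0 := by
      have : 0 < k + 1 - i := by omega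
      exact_mod_cast this.ne'
    rw [div_eq_div_iff h1 h2]
    linear_combination (-(bernoulli i * (p:ℚ) ^ (k + 1 - i))) * hc
  rw [hN, h, Finset.sum_congr rfl hterms, htop]
  ring

lemma padicNorm_two_inv_le : (padicNorm p 2)⁻¹ ≤ (p:ℚ) := by
  rcases eq_or_ne p 2 with rfl | h2
  · rw [show ((2:ℚ)) = ((2:ℕ):ℚ) by norm_num, padicNorm.padicNorm_p_of_prime]
    norm_num
  · have : padicNorm p ((2:ℕ):ℚ) = 1 := by
      rw [padicNorm.nat_eq_one_iff]
      intro hd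
      exact h2 ((Nat.prime_dvd_prime_iff_eq hp.out Nat.prime_two).mp hd)
    rw [show ((2:ℚ)) = ((2:ℕ):ℚ) by norm_num, this, inv_one]
    exact_mod_cast hp.out.one_le

lemma bernoulli_norm_le (j : ℕ) : padicNorm p (bernoulli j) ≤ (p:ℚ) := by
  induction j using Nat.strong_induction_on with
  | _ j ih =>
  have hp1 : (1:ℚ) ≤ p := by exact_mod_cast hp.out.one_le
  have hp0 : (0:ℚ) < p := by exact_mod_cast hp.out.pos
  match j, ih with
  | 0, _ => simpa [bernoulli_zero, padicNorm.one] using hp1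
  | 1, _ => 
    rw [bernoulli_one, show (-1/2 : ℚ) = -(1/2) by norm_num, padicNorm.neg, padicNorm.div,
      padicNorm.one]
    simpa [one_div] using padicNorm_two_inv_le (p := p)
  | (j+2), ih =>
    rcases Nat.even_or_odd (j+2) with hev | hod
    swap
    · rw [bernoulli_eq_bernoulli'_of_ne_one (by omega),
        bernoulli'_eq_zero_of_odd hod (by omega), padicNorm.zero]
      positivity
    · have hkey := faulhaber_key (p := p) (j+2) (by omega)
      have hsum : padicNorm p (∑ i ∈ range (j+2),
          bernoulli i * ((j+2).choose i) * (p:ℚ) ^ (j+2 + 1 - i) / ((j+2 + 1 - i : ℕ) : ℚ)) ≤ 1 := by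
        apply padicNorm.sum_le (by simp)
        intro i hi
        have hik : i < j + 2 := mem_range.mp hi
        have hm1 : 1 ≤ j + 2 + 1 - i := by omega
        have := term_bound (p := p) hm1 (ih i hik) ((j+2).choose i) 0 (by
          have := padicValNat_le_sub_one (p := p) hm1
          omega)
        simpa using this
      have hnorm : padicNorm p ((p:ℚ) * bernoulli (j+2)) ≤ 1 := by
        rw [hkey]
        refine le_trans padicNorm.sub (max_le ?_ hsum)
        exact padicNorm.of_nat _
      rw [padicNorm.mul, padicNorm.padicNorm_p_of_prime] at hnorm
      rw [inv_mul_le_iff₀ hp0, mul_one] at hnorm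
      exact hnorm

theorem stmt_15 (k p : ℕ) (hk : 2 ≤ k) (hke : Even k) (hp : p.Prime) :
    p ∣ (bernoulli k).den ↔ (p - 1) ∣ k := by
  haveI : Fact p.Prime := ⟨hp⟩
  have hp2 := hp.two_le
  rcases eq_or_lt_of_le hk with rfl | hk4
  · -- k = 2
    have hb2 : bernoulli 2 = 1/6 := by
      rw [bernoulli_eq_bernoulli'_of_ne_one (by norm_num), bernoulli'_two]
    have hden : (bernoulli 2).den = 6 := by rw [hb2]; norm_num
    rw [hden]
    constructor
    · intro h
      have h6 : p ≤ 6 := Nat.le_of_dvd (by norm_num) h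
      interval_cases p <;> revert hp h <;> decide
    · intro h
      have h3 : p - 1 ≤ 2 := Nat.le_of_dvd (by norm_num) h
      have : p ≤ 3 := by omega
      interval_cases p <;> revert hp h <;> decide
  · -- k ≥ 4 (even, > 2)
    have hk4' : 4 ≤ k := by
      rcases hke with ⟨r, hr⟩; omega
    have hkey := faulhaber_key (p := p) k (by omega)
    have hp0 : (0:ℚ) < p := by exact_mod_cast hp.pos
    have hp1 : (1:ℚ) < p := by exact_mod_cast hp.one_lt
    set N : ℕ := ∑ i ∈ range p, i ^ k with hN
    set T : ℚ := ∑ i ∈ range k, bernoulli i * (k.choose i) * (p:ℚ) ^ (k + 1 - i) / ((k + 1 - i : ℕ) : ℚ)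
      with hT
    have hTnorm : padicNorm p T ≤ (p:ℚ) ^ (-1 : ℤ) := by
      apply padicNorm.sum_le (nonempty_range_iff.mpr (by omega))
      intro i hi
      have hik : i < k := mem_range.mp hi
      by_cases hB0 : bernoulli i = 0
      · rw [hB0]; simp only [zero_mul, zero_div, padicNorm.zero]; positivity
      · have hm2 : 2 ≤ k + 1 - i := by omega
        have hexc : ¬(p = 2 ∧ k + 1 - i = 2) := by
          rintro ⟨rfl, hm⟩
          have hi' : i = k - 1 := by omega
          have hiodd : Odd i := by
            rcases hke with ⟨r, hr⟩; subst hi'; exact ⟨k/2 - 1, by omega⟩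
          exact hB0 (by rw [bernoulli_eq_bernoulli'_of_ne_one (by omega),
            bernoulli'_eq_zero_of_odd hiodd (by omega)])
        exact term_bound (p := p) (by omega) (bernoulli_norm_le i) _ (-1) (by
          have := padicValNat_le_sub_two (p := p) hm2 hexc
          omega)
    have hZ := sum_pow_cast_zmod (p := p) k (by omega)
    by_cases hdvd : (p - 1) ∣ k
    · rw [if_pos hdvd] at hZ
      have hndvd : ¬ p ∣ N := by
        rw [← ZMod.natCast_eq_zero_iff, hZ]
        intro h
        have : (1 : ZMod p) = 0 := by linear_combination -h
        exact one_ne_zero this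
      have hNnorm : padicNorm p (N:ℚ) = 1 := (padicNorm.nat_eq_one_iff _).mpr hndvd
      have hmax : padicNorm p ((p:ℚ) * bernoulli k) = 1 := by
        rw [hkey, sub_eq_add_neg, padicNorm.add_eq_max_of_ne (by
          rw [hNnorm, padicNorm.neg]
          intro h
          rw [← h] at hTnorm
          have : (p:ℚ) ^ (-1:ℤ) < 1 := by
            rw [zpow_neg_one]
            exact inv_lt_one_of_one_lt₀ hp1
          linarith), hNnorm, padicNorm.neg]
        have hTlt : padicNorm p T < 1 := lt_of_le_of_lt hTnorm (by
          rw [zpow_neg_one]; exact inv_lt_one_of_one_lt₀ hp1)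
        rw [max_eq_left hTlt.le]
      rw [padicNorm.mul, padicNorm.padicNorm_p_of_prime] at hmax
      have hBk : padicNorm p (bernoulli k) = p := by
        field_simp at hmax
        linarith
      exact iff_of_true ((den_dvd_iff_norm _).mpr (by rw [hBk]; exact hp1)) hdvd
    · rw [if_neg hdvd] at hZ
      have hpN : p ∣ N := (ZMod.natCast_eq_zero_iff _ _).mp hZ
      have hNnorm : padicNorm p (N:ℚ) ≤ (p:ℚ) ^ (-1:ℤ) := by
        have : ((p ^ 1 : ℕ) : ℤ) ∣ (N : ℤ) := by exact_mod_cast (by simpa using hpN)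
        have h := (padicNorm.dvd_iff_norm_le (p := p) (n := 1) (z := (N:ℤ))).mp this
        simpa using h
      have hle : padicNorm p ((p:ℚ) * bernoulli k) ≤ (p:ℚ) ^ (-1:ℤ) := by
        rw [hkey]
        exact le_trans padicNorm.sub (max_le hNnorm hTnorm)
      rw [padicNorm.mul, padicNorm.padicNorm_p_of_prime] at hle
      have hBk : padicNorm p (bernoulli k) ≤ 1 := by
        rw [zpow_neg_one] at hle
        have := (inv_mul_le_iff₀ hp0).mp hle
        rw [mul_inv_cancel₀ hp0.ne'] at this
        exact this
      refine iff_of_false (fun h => ?_) hdvd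
      rw [den_dvd_iff_norm] at h
      linarith
end

section
/- If n ≡ 2 (mod 4) and k ≥ 1, then the average (1^k + ... + n^k)/n is never an integer. -/
lemma sum_odd_aux (n k : ℕ) (hn : n % 4 = 2) (hk : 1 ≤ k) :
    (∑ j ∈ Finset.Icc 1 n, j ^ k) % 2 = 1 := by
  have h1 : (∑ j ∈ Finset.Icc 1 n, j ^ k) % 2 = (∑ j ∈ Finset.Icc 1 n, j) % 2 := by
    rw [Finset.sum_nat_mod, Finset.sum_nat_mod (f := fun j => j)]
    congr 1
    apply Finset.sum_congr rfl
    intro j _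
    rw [Nat.pow_mod]
    rcases Nat.mod_two_eq_zero_or_one j with h | h <;> rw [h]
    · rw [zero_pow (by omega)]; rfl
    · rw [one_pow]; rfl
  rw [h1]
  have h2 : (∑ j ∈ Finset.Icc 1 n, j) * 2 = n * (n + 1) := by
    have := Finset.sum_range_id_mul_two (n + 1)
    have heq : ∑ j ∈ Finset.Icc 1 n, j = ∑ i ∈ Finset.range (n + 1), i := by
      symm
      rw [Finset.range_eq_Ico, Finset.sum_eq_sum_Ico_succ_bot (by omega)]
      simp [Finset.Ico_add_one_right_eq_Icc]
    rw [heq, this]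
    simp [Nat.mul_comm]
  obtain ⟨q, hq⟩ : ∃ q, n = 4 * q + 2 := ⟨n / 4, by omega⟩
  have h3 : (∑ j ∈ Finset.Icc 1 n, j) = (2 * q + 1) * (4 * q + 3) := by
    subst hq; nlinarith [h2]
  have ha : (2 * q + 1) % 2 = 1 := by omega
  have hb : (4 * q + 3) % 2 = 1 := by omega
  rw [h3, Nat.mul_mod, ha, hb]

theorem stmt_18 (n k : ℕ) (hn : n % 4 = 2) (hk : 1 ≤ k) :
    ¬ ∃ m : ℤ, ((∑ j ∈ Finset.Icc 1 n, j ^ k : ℕ) : ℚ) / (n : ℚ) = (m : ℚ) := by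
  rintro ⟨m, hm⟩
  have hn0 : (n : ℚ) ≠ 0 := by
    have : n ≠ 0 := by omega
    exact_mod_cast this
  have heq : ((∑ j ∈ Finset.Icc 1 n, j ^ k : ℕ) : ℚ) = (m : ℚ) * (n : ℚ) := by
    push_cast
    field_simp at hm
    push_cast at hm
    linarith [hm]
  have hz : ((∑ j ∈ Finset.Icc 1 n, j ^ k : ℕ) : ℤ) = m * n := by exact_mod_cast heq
  have hdvd : (2 : ℤ) ∣ ((∑ j ∈ Finset.Icc 1 n, j ^ k : ℕ) : ℤ) := by
    rw [hz]
    exact Dvd.dvd.mul_left ⟨(n : ℤ) / 2, by omega⟩ m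
  have hdvd2 : 2 ∣ (∑ j ∈ Finset.Icc 1 n, j ^ k) := by exact_mod_cast hdvd
  have := sum_odd_aux n k hn hk
  omega
end
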